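/- arXiv:2112.08581 — 3 statements merged into one kernel-verified Lean document; each statement's English description precedes it below -/
import Mathlib

section
/- Let F ⊆ {(k, n-k) : k ∈ [0..n]} be a set of points on the Pareto front of OneMinMax. Then the number of points (v_1, v_2) ∈ F for which not both neighbors (v_1+1, v_2-1) and (v_1-1, v_2+1) lie in F is at most 2⌈(n+1)/3⌉: out of any three consecutive front points (w, n-w), (w+1, n-w-1), (w+2, n-w-2), at most two can be in F while lacking both neighbors in F. -/
/-- For a subset F of the Pareto front {(k, n-k) : k ∈ [0..n]} of OneMinMax,
the number of points of F lacking at least one of the two neighbors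
(v₁+1, v₂-1), (v₁-1, v₂+1) in F is at most 2⌈(n+1)/3⌉. -/
theorem omm_front_missing_neighbors (n : ℕ) (F : Finset (ℕ × ℕ))
    (hF : ∀ p ∈ F, ∃ k ≤ n, p = (k, n - k)) :
    (F.filter (fun p => ¬ ((p.1 + 1, p.2 - 1) ∈ F ∧ (p.1 - 1, p.2 + 1) ∈ F))).card
      ≤ 2 * ((n + 1 + 2) / 3) := by
  set T := F.filter (fun p => ¬ ((p.1 + 1, p.2 - 1) ∈ F ∧ (p.1 - 1, p.2 + 1) ∈ F)) with hT
  set A := T.image Prod.fst with hA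
  have hTF : T ⊆ F := Finset.filter_subset _ _
  have hform : ∀ p ∈ T, p = (p.1, n - p.1) ∧ p.1 ≤ n := by
    intro p hp
    obtain ⟨k, hk, hpk⟩ := hF p (hTF hp)
    subst hpk; exact ⟨rfl, hk⟩
  have hcard : T.card = A.card := by
    rw [hA, Finset.card_image_of_injOn]
    intro p hp q hq hpq
    have h1 := (hform p hp).1
    have h2 := (hform q hq).1
    rw [h1, h2, hpq]
  have hAle : ∀ k ∈ A, k ≤ n := by
    intro k hk
    obtain ⟨p, hp, rfl⟩ := Finset.mem_image.mp hk
    exact (hform p hp).2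
  have hnot3 : ∀ m, ¬ (3*m ∈ A ∧ 3*m+1 ∈ A ∧ 3*m+2 ∈ A) := by
    rintro m ⟨h0, h1, h2⟩
    obtain ⟨p, hp, hp1⟩ := Finset.mem_image.mp h0
    obtain ⟨q, hq, hq1⟩ := Finset.mem_image.mp h1
    obtain ⟨r, hr, hr1⟩ := Finset.mem_image.mp h2
    have hpf := (hform p hp).1
    have hqf := (hform q hq).1
    have hrf := (hform r hr).1
    have hrn := (hform r hr).2
    have hqmem := Finset.mem_filter.mp hq
    apply hqmem.2
    constructor
    · have heq : (q.1 + 1, q.2 - 1) = r := by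
        rw [hrf, hqf]
        simp only [Prod.mk.injEq]
        omega
      rw [heq]; exact hTF hr
    · have heq : (q.1 - 1, q.2 + 1) = p := by
        rw [hpf, hqf]
        simp only [Prod.mk.injEq]
        omega
      rw [heq]; exact hTF hp
  have hcover : A ⊆ (Finset.range ((n+3)/3)).biUnion
      (fun m => A ∩ {3*m, 3*m+1, 3*m+2}) := by
    intro k hk
    have hkn := hAle k hk
    refine Finset.mem_biUnion.mpr ⟨k / 3, ?_, ?_⟩
    · rw [Finset.mem_range]; omega
    · refine Finset.mem_inter.mpr ⟨hk, ?_⟩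
      simp only [Finset.mem_insert, Finset.mem_singleton]
      omega
  have hpair : ∀ a b : ℕ, ({a, b} : Finset ℕ).card ≤ 2 :=
    fun a b => (Finset.card_insert_le _ _).trans (by simp)
  have hpiece : ∀ m, (A ∩ {3*m, 3*m+1, 3*m+2}).card ≤ 2 := by
    intro m
    have hnot := hnot3 m
    have hmiss : 3*m ∉ A ∨ 3*m+1 ∉ A ∨ 3*m+2 ∉ A := by tauto
    rcases hmiss with h | h | h
    · refine le_trans (Finset.card_le_card (fun x hx => ?_)) (hpair (3*m+1) (3*m+2))
      have hx' := Finset.mem_inter.mp hx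
      have hx1 := hx'.1
      have hx2 := hx'.2
      simp only [Finset.mem_insert, Finset.mem_singleton] at hx2 ⊢
      rcases hx2 with rfl | h2 | h2
      · exact absurd hx1 h
      · exact Or.inl h2
      · exact Or.inr h2
    · refine le_trans (Finset.card_le_card (fun x hx => ?_)) (hpair (3*m) (3*m+2))
      have hx' := Finset.mem_inter.mp hx
      have hx1 := hx'.1
      have hx2 := hx'.2
      simp only [Finset.mem_insert, Finset.mem_singleton] at hx2 ⊢
      rcases hx2 with h2 | rfl | h2
      · exact Or.inl h2
      · exact absurd hx1 h
      · exact Or.inr h2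
    · refine le_trans (Finset.card_le_card (fun x hx => ?_)) (hpair (3*m) (3*m+1))
      have hx' := Finset.mem_inter.mp hx
      have hx1 := hx'.1
      have hx2 := hx'.2
      simp only [Finset.mem_insert, Finset.mem_singleton] at hx2 ⊢
      rcases hx2 with h2 | h2 | rfl
      · exact Or.inl h2
      · exact Or.inr h2
      · exact absurd hx1 h
  have hfinal : T.card ≤ 2 * ((n+3)/3) := by
    calc T.card = A.card := hcard
      _ ≤ ((Finset.range ((n+3)/3)).biUnion
            (fun m => A ∩ {3*m, 3*m+1, 3*m+2})).card :=
          Finset.card_le_card hcover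
      _ ≤ ∑ m ∈ Finset.range ((n+3)/3), (A ∩ {3*m, 3*m+1, 3*m+2}).card :=
          Finset.card_biUnion_le
      _ ≤ ∑ m ∈ Finset.range ((n+3)/3), 2 :=
          Finset.sum_le_sum (fun m _ => hpiece m)
      _ = ((n+3)/3) * 2 := by rw [Finset.sum_const, Finset.card_range, smul_eq_mul]
      _ = 2 * ((n+3)/3) := by ring
  have : n + 1 + 2 = n + 3 := by omega
  rw [this]
  exact hfinal
end

section
/- Let P be a population of at most n+1 individuals on the Pareto front [0..n], and Δ a positive integer. Let F' be the set of values v ∈ [0..n] such that at least Δ+1 individuals of P have value v-1 or v+1. Then |F'| ≤ 2(n+1)/(Δ+1). -/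
lemma sum_countP_eq (s : Finset ℕ) (p : ℕ → ℕ → Prop) [∀ v w, Decidable (p v w)]
    (P : Multiset ℕ) :
    ∑ v ∈ s, Multiset.countP (p v) P
      = (P.map fun w => (s.filter fun v => p v w).card).sum := by
  induction P using Multiset.induction with
  | empty => simp
  | cons a P ih =>
    simp only [Multiset.countP_cons, Multiset.map_cons, Multiset.sum_cons,
      Finset.sum_add_distrib, ih, Finset.card_filter]
    ring

/-- If a population P of at most n+1 individuals takes values in [0..n], and
F' is the set of values v ∈ [0..n] such that at least Δ+1 individuals of P
have value v-1 or v+1, then |F'| ≤ 2(n+1)/(Δ+1). -/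
theorem crowded_values_bound (n Δ : ℕ) (hΔ : 1 ≤ Δ)
    (P : Multiset ℕ) (hval : ∀ w ∈ P, w ≤ n) (hcard : Multiset.card P ≤ n + 1) :
    ((((Finset.range (n + 1)).filter
        (fun v => Δ + 1 ≤ Multiset.countP (fun w => w + 1 = v ∨ w = v + 1) P)).card : ℝ))
      ≤ 2 * (n + 1) / (Δ + 1) := by
  set F := (Finset.range (n + 1)).filter
      (fun v => Δ + 1 ≤ Multiset.countP (fun w => w + 1 = v ∨ w = v + 1) P) with hF
  have key : (Δ + 1) * F.card ≤ 2 * (n + 1) := by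
    calc (Δ + 1) * F.card = ∑ _v ∈ F, (Δ + 1) := by
          simp [Finset.sum_const, mul_comm]
      _ ≤ ∑ v ∈ F, Multiset.countP (fun w => w + 1 = v ∨ w = v + 1) P :=
          Finset.sum_le_sum (fun v hv => (Finset.mem_filter.mp hv).2)
      _ = (P.map fun w => (F.filter fun v => w + 1 = v ∨ w = v + 1).card).sum :=
          sum_countP_eq F (fun v w => w + 1 = v ∨ w = v + 1) P
      _ ≤ (P.map fun _w => 2).sum := by
          apply Multiset.sum_map_le_sum_map
          intro w _
          have hsub : (F.filter fun v => w + 1 = v ∨ w = v + 1) ⊆ {w + 1, w - 1} := by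
            intro v hv
            rcases (Finset.mem_filter.mp hv).2 with h | h <;>
              simp [Finset.mem_insert] <;> omega
          calc (F.filter fun v => w + 1 = v ∨ w = v + 1).card
              ≤ ({w + 1, w - 1} : Finset ℕ).card := Finset.card_le_card hsub
            _ ≤ 2 := Finset.card_le_two
      _ = 2 * Multiset.card P := by simp [mul_comm]
      _ ≤ 2 * (n + 1) := by omega
  rw [le_div_iff₀ (by positivity)]
  calc (F.card : ℝ) * ((Δ : ℝ) + 1) = ((Δ + 1) * F.card : ℕ) := by push_cast; ring
    _ ≤ ((2 * (n + 1) : ℕ) : ℝ) := by exact_mod_cast key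
    _ = 2 * ((n : ℝ) + 1) := by push_cast; ring
end

section
/- Consider one-bit mutation applied independently to each of n+1 parents whose objective values on the OneMinMax front are such that value v-1 is covered by a parents and value v+1 is covered by b parents, with |v - (v±1)| handled as: each parent with value v-1 produces an offspring with value v with probability (n-v+1)/n, each parent with value v+1 with probability (v+1)/n. If a + b ≤ Δ and v ∈ [⌊εn/5⌋+1 .. n-⌊εn/5⌋-1], then the probability that no offspring has value v is at least (ε/5 - 2/n)^Δ. -/
/-- One-bit mutation of parents adjacent to a front value v of OneMinMax: each
of the a parents with value v-1 independently creates an offspring with value v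
with probability (n-v+1)/n, and each of the b parents with value v+1 does so
with probability (v+1)/n. If a + b ≤ Δ = ⌈5/ε⌉ - 1 and
v ∈ [⌊εn/5⌋+1 .. n-⌊εn/5⌋-1], then the probability that no offspring has
value v, namely (1-(n-v+1)/n)^a · (1-(v+1)/n)^b, is at least (ε/5 - 2/n)^Δ. -/
theorem prob_value_not_generated (n v a b : ℕ) (ε : ℝ) (hε : 0 < ε) (hε1 : ε < 1)
    (hn : 10 / ε ≤ (n : ℝ))
    (hab : a + b ≤ ⌈5 / ε⌉₊ - 1)
    (hv1 : Nat.floor (ε * n / 5) + 1 ≤ v)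
    (hv2 : v ≤ n - Nat.floor (ε * n / 5) - 1) :
    (1 - ((n : ℝ) - v + 1) / n) ^ a * (1 - ((v : ℝ) + 1) / n) ^ b
      ≥ (ε / 5 - 2 / n) ^ (⌈5 / ε⌉₊ - 1) := by
  set f := Nat.floor (ε * n / 5) with hf
  have hnpos : (0 : ℝ) < n := lt_of_lt_of_le (by positivity) hn
  have hεn : 10 ≤ (n : ℝ) * ε := (div_le_iff₀ hε).mp hn
  have harg : 0 ≤ ε * (n : ℝ) / 5 := by positivity
  have hfle : (f : ℝ) ≤ ε * n / 5 := Nat.floor_le harg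
  have hflt : ε * (n : ℝ) / 5 < f + 1 := Nat.lt_floor_add_one _
  -- key1 : ε n /5 ≤ v
  have hv1' : (f : ℝ) + 1 ≤ v := by exact_mod_cast hv1
  have key1 : ε * (n : ℝ) / 5 ≤ v := le_trans (le_of_lt hflt) hv1'
  -- f + 1 ≤ n in ℕ
  have hfn : f + 1 ≤ n := by
    have : (f : ℝ) < n := by nlinarith
    exact_mod_cast this
  have hvfn : v + (f + 1) ≤ n := by
    have := hv2
    omega
  have key2 : (v : ℝ) + f + 1 ≤ n := by
    have : ((v + (f + 1) : ℕ) : ℝ) ≤ n := by exact_mod_cast hvfn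
    push_cast at this
    linarith
  have hc0 : 0 ≤ ε / 5 - 2 / n := by
    rw [sub_nonneg, div_le_div_iff₀ hnpos (by norm_num : (0:ℝ) < 5)]
    nlinarith
  have hc1 : ε / 5 - 2 / n ≤ 1 := by
    have : 0 ≤ 2 / (n : ℝ) := by positivity
    linarith
  have hx : ε / 5 - 2 / n ≤ 1 - ((n : ℝ) - v + 1) / n := by
    have e1 : ε / 5 - 2 / n = (ε * n / 5 - 2) / n := by field_simp
    have e2 : 1 - ((n : ℝ) - v + 1) / n = ((v : ℝ) - 1) / n := by field_simp; ring
    rw [e1, e2, div_le_div_iff₀ hnpos hnpos]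
    nlinarith
  have hy : ε / 5 - 2 / n ≤ 1 - ((v : ℝ) + 1) / n := by
    have e1 : ε / 5 - 2 / n = (ε * n / 5 - 2) / n := by field_simp
    have e2 : 1 - ((v : ℝ) + 1) / n = ((n : ℝ) - v - 1) / n := by field_simp; ring
    rw [e1, e2, div_le_div_iff₀ hnpos hnpos]
    nlinarith
  calc (ε / 5 - 2 / n) ^ (⌈5 / ε⌉₊ - 1)
      ≤ (ε / 5 - 2 / n) ^ (a + b) := pow_le_pow_of_le_one hc0 hc1 hab
    _ = (ε / 5 - 2 / n) ^ a * (ε / 5 - 2 / n) ^ b := pow_add _ _ _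
    _ ≤ (1 - ((n : ℝ) - v + 1) / n) ^ a * (1 - ((v : ℝ) + 1) / n) ^ b := by
        apply mul_le_mul (pow_le_pow_left₀ hc0 hx a) (pow_le_pow_left₀ hc0 hy b)
          (pow_nonneg hc0 b) (pow_nonneg (le_trans hc0 hx) a)
end
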